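/- The polynomial f(x) = x^3 + 4x^2 + 3x - 1 is irreducible over ℚ and f ∘ f is reducible in ℚ[x]. -/

import Mathlib

open Polynomial

lemma zint_irred : Irreducible (X^3 + 4*X^2 + 3*X - 1 : Polynomial ℤ) := by
  have hm : (X^3 + 4*X^2 + 3*X - 1 : Polynomial ℤ).Monic := by
    monicity!
  have hd : (X^3 + 4*X^2 + 3*X - 1 : Polynomial ℤ).natDegree = 3 := by compute_degree!
  rw [hm.irreducible_iff_roots_eq_zero_of_degree_le_three (by omega) (by omega)]
  rw [Multiset.eq_zero_iff_forall_notMem]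
  intro a ha
  rw [mem_roots hm.ne_zero, IsRoot.def] at ha
  simp only [eval_sub, eval_add, eval_mul, eval_pow, eval_X, eval_one, eval_ofNat] at ha
  have h1 : a * (a^2 + 4*a + 3) = 1 := by linarith [ha]
  have := IsUnit.of_mul_eq_one _ h1
  rcases Int.isUnit_iff.mp this with rfl | rfl <;> norm_num at h1

theorem stmt_12 :
    Irreducible (X^3 + 4*X^2 + 3*X - 1 : Polynomial ℚ) ∧
    ¬ IsUnit ((X^3 + 4*X^2 + 3*X - 1 : Polynomial ℚ).comp (X^3 + 4*X^2 + 3*X - 1)) ∧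
    ¬ Irreducible ((X^3 + 4*X^2 + 3*X - 1 : Polynomial ℚ).comp (X^3 + 4*X^2 + 3*X - 1)) := by
  have hm : (X^3 + 4*X^2 + 3*X - 1 : Polynomial ℤ).Monic := by
    monicity!
  have hmap : Polynomial.map (Int.castRingHom ℚ) (X^3 + 4*X^2 + 3*X - 1 : Polynomial ℤ)
      = (X^3 + 4*X^2 + 3*X - 1 : Polynomial ℚ) := by
    simp [Polynomial.map_add, Polynomial.map_sub, Polynomial.map_mul, Polynomial.map_pow,
      Polynomial.map_ofNat]
  have hirr : Irreducible (X^3 + 4*X^2 + 3*X - 1 : Polynomial ℚ) := by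
    rw [← hmap]
    exact (hm.irreducible_iff_irreducible_map_fraction_map (K := ℚ)).mp zint_irred
  have hcomp : ((X^3 + 4*X^2 + 3*X - 1 : Polynomial ℚ).comp (X^3 + 4*X^2 + 3*X - 1))
      = (X^3 + 5*X^2 + 6*X + 1) * (X^6 + 7*X^5 + 16*X^4 + 14*X^3 + 6*X^2 - 1) := by
    simp only [add_comp, sub_comp, mul_comp, pow_comp, X_comp, one_comp, ofNat_comp]
    ring
  have h3 : (X^3 + 5*X^2 + 6*X + 1 : Polynomial ℚ).natDegree = 3 := by compute_degree!
  have h6 : (X^6 + 7*X^5 + 16*X^4 + 14*X^3 + 6*X^2 - 1 : Polynomial ℚ).natDegree = 6 := by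
    compute_degree!
  refine ⟨hirr, ?_, ?_⟩
  · rw [hcomp]
    intro h
    have := natDegree_eq_zero_of_isUnit h
    rw [natDegree_mul, h3, h6] at this
    · omega
    · intro h0; rw [h0] at h3; simp at h3
    · intro h0; rw [h0] at h6; simp at h6
  · rw [hcomp]
    intro h
    rcases h.isUnit_or_isUnit rfl with hu | hu
    · have := natDegree_eq_zero_of_isUnit hu; omega
    · have := natDegree_eq_zero_of_isUnit hu; omega
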